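/- Suppose there is a constant B such that |f(X) − Y|² ≤ B almost surely for every regressor f under consideration. Let (f_n)_{n≥1} be measurable regressors and (r_n)_{n≥1} measurable rejectors such that E[(f_n(X) − f*(X))²] → 0 and E[(r_n(X) − r_{f_n}(X))²] → 0 as n → ∞, where f* = f̄ and r_{f_n} is the rejector induced by f_n. Then L_RwR(f_n, r_n) → L_RwR(f*, r*) as n → ∞, where r*(x) = 1{R(f*,x) ≤ c}. -/

import Mathlib

open MeasureTheory Filter

noncomputable section

/-- The regression-with-rejection (RwR) loss
`L_RwR(f,r) = E[ r(X)·(f(X)−Y)² + (1−r(X))·c ]`. -/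
def LRwR {Ω : Type*} [MeasurableSpace Ω] {d : ℕ} (μ : Measure Ω)
    (X : Ω → EuclideanSpace ℝ (Fin d)) (Y : Ω → ℝ) (c : ℝ)
    (f r : EuclideanSpace ℝ (Fin d) → ℝ) : ℝ :=
  ∫ ω, r (X ω) * (f (X ω) - Y ω) ^ 2 + (1 - r (X ω)) * c ∂μ

/-- `g : 𝒳 → ℝ` is a measurable version of the conditional expectation
`E[Z | X]`, i.e. `g(X) = E[Z | σ(X)]` a.s. -/
def IsCondMean {Ω : Type*} [MeasurableSpace Ω] {d : ℕ} (μ : Measure Ω)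
    (X : Ω → EuclideanSpace ℝ (Fin d)) (Z : Ω → ℝ)
    (g : EuclideanSpace ℝ (Fin d) → ℝ) : Prop :=
  (fun ω => g (X ω)) =ᵐ[μ] μ[Z | MeasurableSpace.comap X inferInstance]

namespace Stmt16Aux

lemma min_lip (a b c : ℝ) : |min a c - min b c| ≤ |a - b| := by
  rcases le_total a c with h1 | h1 <;> rcases le_total b c with h2 | h2
  · rw [min_eq_left h1, min_eq_left h2]
  · rw [min_eq_left h1, min_eq_right h2,
      abs_of_nonpos (by linarith), abs_of_nonpos (by linarith)]
    linarith
  · rw [min_eq_right h1, min_eq_left h2,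
      abs_of_nonneg (by linarith), abs_of_nonneg (by linarith)]
    linarith
  · rw [min_eq_right h1, min_eq_right h2]
    simp [abs_nonneg]

lemma int_abs_le_sqrt {Ω : Type*} [MeasurableSpace Ω] (μ : Measure Ω) [IsProbabilityMeasure μ]
    (h : Ω → ℝ) (hL2 : MemLp h 2 μ) :
    ∫ ω, |h ω| ∂μ ≤ Real.sqrt (∫ ω, (h ω) ^ 2 ∂μ) := by
  have habs : MemLp (fun ω => |h ω|) 2 μ := by
    simpa [Real.norm_eq_abs] using hL2.norm
  have hvar := ProbabilityTheory.variance_nonneg (fun ω => |h ω|) μ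
  rw [ProbabilityTheory.variance_eq_sub habs] at hvar
  have hEq : (∫ ω, ((fun ω => |h ω|) ^ 2) ω ∂μ) = ∫ ω, (h ω) ^ 2 ∂μ := by
    apply integral_congr_ae
    filter_upwards with ω
    simp [sq_abs]
  rw [hEq] at hvar
  refine (Real.le_sqrt (integral_nonneg fun ω => abs_nonneg _) (integral_nonneg fun ω => sq_nonneg _)).mpr ?_
  linarith

lemma LRwR_ind_eq {Ω : Type*} [MeasurableSpace Ω] {d : ℕ} (μ : Measure Ω) [IsProbabilityMeasure μ]
    (X : Ω → EuclideanSpace ℝ (Fin d)) (hX : Measurable X) (Y : Ω → ℝ) (hY : Measurable Y)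
    (c : ℝ) (g : EuclideanSpace ℝ (Fin d) → ℝ) (hg : Measurable g)
    (R : EuclideanSpace ℝ (Fin d) → ℝ) (hR : Measurable R)
    (hZint : Integrable (fun ω => (g (X ω) - Y ω) ^ 2) μ)
    (hRce : IsCondMean μ X (fun ω => (g (X ω) - Y ω) ^ 2) R) :
    LRwR μ X Y c g (fun x => if R x ≤ c then 1 else 0) = ∫ ω, min (R (X ω)) c ∂μ := by
  have hm : MeasurableSpace.comap X inferInstance ≤ _ := hX.comap_le
  haveI : SigmaFinite (μ.trim hm) := inferInstance
  have hZm : Measurable (fun ω => (g (X ω) - Y ω) ^ 2) :=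
    ((hg.comp hX).sub hY).pow_const 2
  have hind_m : Measurable (fun ω => if R (X ω) ≤ c then (1 : ℝ) else 0) :=
    Measurable.ite (measurableSet_le (hR.comp hX) measurable_const)
      measurable_const measurable_const
  have hind_sm : StronglyMeasurable[MeasurableSpace.comap X inferInstance]
      (fun ω => if R (X ω) ≤ c then (1 : ℝ) else 0) := by
    have hXm : Measurable[MeasurableSpace.comap X inferInstance] X :=
      Measurable.of_comap_le le_rfl
    exact ((Measurable.ite (measurableSet_le hR measurable_const)
      measurable_const measurable_const).comp hXm).stronglyMeasurable
  have hind_bdd : ∀ᵐ ω ∂μ, ‖if R (X ω) ≤ c then (1 : ℝ) else 0‖ ≤ 1 := by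
    filter_upwards with ω
    by_cases h : R (X ω) ≤ c <;> simp [h]
  have hind_int : Integrable (fun ω => if R (X ω) ≤ c then (1 : ℝ) else 0) μ :=
    (integrable_const (1 : ℝ)).mono' hind_m.aestronglyMeasurable hind_bdd
  have hRX_int : Integrable (fun ω => R (X ω)) μ := integrable_condExp.congr hRce.symm
  have h1int : Integrable
      (fun ω => (if R (X ω) ≤ c then (1 : ℝ) else 0) * (g (X ω) - Y ω) ^ 2) μ :=
    hZint.bdd_mul hind_m.aestronglyMeasurable hind_bdd
  have h2int : Integrable (fun ω => (1 - if R (X ω) ≤ c then (1 : ℝ) else 0) * c) μ :=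
    (((integrable_const (1 : ℝ)).sub hind_int).mul_const c)
  have h3int : Integrable
      (fun ω => (if R (X ω) ≤ c then (1 : ℝ) else 0) * R (X ω)) μ :=
    hRX_int.bdd_mul hind_m.aestronglyMeasurable hind_bdd
  have pullout :
      μ[(fun ω => if R (X ω) ≤ c then (1 : ℝ) else 0) *
          (fun ω => (g (X ω) - Y ω) ^ 2)|MeasurableSpace.comap X inferInstance] =ᵐ[μ]
        (fun ω => if R (X ω) ≤ c then (1 : ℝ) else 0) *
          μ[(fun ω => (g (X ω) - Y ω) ^ 2)|MeasurableSpace.comap X inferInstance] :=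
    condExp_stronglyMeasurable_mul_of_bound hm hind_sm hZint 1 hind_bdd
  have step1 :
      ∫ ω, (if R (X ω) ≤ c then (1 : ℝ) else 0) * (g (X ω) - Y ω) ^ 2 ∂μ =
        ∫ ω, (if R (X ω) ≤ c then (1 : ℝ) else 0) * R (X ω) ∂μ := by
    have e1 : ∫ ω, (if R (X ω) ≤ c then (1 : ℝ) else 0) * (g (X ω) - Y ω) ^ 2 ∂μ =
        ∫ ω, (μ[(fun ω => if R (X ω) ≤ c then (1 : ℝ) else 0) *
          (fun ω => (g (X ω) - Y ω) ^ 2)|MeasurableSpace.comap X inferInstance]) ω ∂μ :=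
      (integral_condExp hm).symm
    rw [e1, integral_congr_ae pullout]
    apply integral_congr_ae
    filter_upwards [hRce] with ω hω
    simp only [Pi.mul_apply]
    rw [← hω]
  have final : ∀ ω, (if R (X ω) ≤ c then (1 : ℝ) else 0) * R (X ω) +
      (1 - if R (X ω) ≤ c then (1 : ℝ) else 0) * c = min (R (X ω)) c := by
    intro ω
    by_cases h : R (X ω) ≤ c
    · simp [h, min_eq_left h]
    · simp [h, min_eq_right (le_of_lt (lt_of_not_ge h))]
  rw [LRwR, integral_add h1int h2int, step1, ← integral_add h3int h2int]
  exact integral_congr_ae (Eventually.of_forall fun ω => final ω)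

end Stmt16Aux

/-- consistency of the regressor–rejector pair. If the squared
losses are uniformly bounded by `B` a.s., `E[(f_n(X) − f*(X))²] → 0` and
`E[(r_n(X) − r_{f_n}(X))²] → 0`, then `L_RwR(f_n, r_n) → L_RwR(f*, r*)`. -/
theorem stmt16 {Ω : Type*} [MeasurableSpace Ω] {d : ℕ}
    (μ : Measure Ω) [IsProbabilityMeasure μ]
    (X : Ω → EuclideanSpace ℝ (Fin d)) (Y : Ω → ℝ)
    (hX : Measurable X) (hY : Measurable Y)
    (hY2 : Integrable (fun ω => (Y ω) ^ 2) μ)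
    (c : ℝ) (hc : 0 < c)
    (fstar : EuclideanSpace ℝ (Fin d) → ℝ) (hfstar_m : Measurable fstar)
    (hfstar : IsCondMean μ X Y fstar)
    (Rstar : EuclideanSpace ℝ (Fin d) → ℝ) (hRstar_m : Measurable Rstar)
    (hRstar : IsCondMean μ X (fun ω => (fstar (X ω) - Y ω) ^ 2) Rstar)
    (f : ℕ → EuclideanSpace ℝ (Fin d) → ℝ) (hf : ∀ n, Measurable (f n))
    (Rf : ℕ → EuclideanSpace ℝ (Fin d) → ℝ) (hRf_m : ∀ n, Measurable (Rf n))
    (hRf : ∀ n, IsCondMean μ X (fun ω => (f n (X ω) - Y ω) ^ 2) (Rf n))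
    (r : ℕ → EuclideanSpace ℝ (Fin d) → ℝ) (hr_m : ∀ n, Measurable (r n))
    (hr01 : ∀ n x, r n x = 0 ∨ r n x = 1)
    -- uniform a.s. bound on the squared losses of the regressors considered
    (B : ℝ)
    (hBn : ∀ n, ∀ᵐ ω ∂μ, (f n (X ω) - Y ω) ^ 2 ≤ B)
    (hBstar : ∀ᵐ ω ∂μ, (fstar (X ω) - Y ω) ^ 2 ≤ B)
    -- consistency of the regressors and of the rejectors
    (hfconv : Tendsto (fun n => ∫ ω, (f n (X ω) - fstar (X ω)) ^ 2 ∂μ) atTop (nhds 0))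
    (hrconv : Tendsto
      (fun n => ∫ ω, (r n (X ω) - (if Rf n (X ω) ≤ c then (1 : ℝ) else 0)) ^ 2 ∂μ)
      atTop (nhds 0)) :
    Tendsto (fun n => LRwR μ X Y c (f n) (r n)) atTop
      (nhds (LRwR μ X Y c fstar (fun x => if Rstar x ≤ c then 1 else 0))) := by
  classical
  have hm : MeasurableSpace.comap X inferInstance ≤ _ := hX.comap_le
  haveI : SigmaFinite (μ.trim hm) := inferInstance
  have hB0 : 0 ≤ B := by
    obtain ⟨ω, hω⟩ := hBstar.exists
    exact (sq_nonneg _).trans hω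
  have hZm : ∀ n, Measurable (fun ω => (f n (X ω) - Y ω) ^ 2) := fun n =>
    (((hf n).comp hX).sub hY).pow_const 2
  have hZsm : Measurable (fun ω => (fstar (X ω) - Y ω) ^ 2) :=
    ((hfstar_m.comp hX).sub hY).pow_const 2
  have hZint : ∀ n, Integrable (fun ω => (f n (X ω) - Y ω) ^ 2) μ := fun n =>
    (integrable_const B).mono' (hZm n).aestronglyMeasurable (by
      filter_upwards [hBn n] with ω h
      rw [Real.norm_eq_abs, abs_of_nonneg (sq_nonneg _)]; exact h)
  have hZsint : Integrable (fun ω => (fstar (X ω) - Y ω) ^ 2) μ :=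
    (integrable_const B).mono' hZsm.aestronglyMeasurable (by
      filter_upwards [hBstar] with ω h
      rw [Real.norm_eq_abs, abs_of_nonneg (sq_nonneg _)]; exact h)
  have key : ∀ n, LRwR μ X Y c (f n) (fun x => if Rf n x ≤ c then 1 else 0)
      = ∫ ω, min (Rf n (X ω)) c ∂μ := fun n =>
    Stmt16Aux.LRwR_ind_eq μ X hX Y hY c (f n) (hf n) (Rf n) (hRf_m n) (hZint n) (hRf n)
  have keystar : LRwR μ X Y c fstar (fun x => if Rstar x ≤ c then 1 else 0)
      = ∫ ω, min (Rstar (X ω)) c ∂μ :=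
    Stmt16Aux.LRwR_ind_eq μ X hX Y hY c fstar hfstar_m Rstar hRstar_m hZsint hRstar
  have hRfint : ∀ n, Integrable (fun ω => Rf n (X ω)) μ := fun n =>
    integrable_condExp.congr (hRf n).symm
  have hRsint : Integrable (fun ω => Rstar (X ω)) μ := integrable_condExp.congr hRstar.symm
  have hminint : ∀ (R' : EuclideanSpace ℝ (Fin d) → ℝ), Measurable R' →
      Integrable (fun ω => R' (X ω)) μ → Integrable (fun ω => min (R' (X ω)) c) μ := by
    intro R' hR' hint
    refine (hint.abs.add (integrable_const |c|)).mono'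
      ((hR'.comp hX).min measurable_const).aestronglyMeasurable
      (Eventually.of_forall fun ω => ?_)
    rw [Real.norm_eq_abs]
    rcases min_choice (R' (X ω)) c with h | h <;> rw [h]
    · exact le_add_of_nonneg_right (abs_nonneg _)
    · exact le_add_of_nonneg_left (abs_nonneg _)
  -- Step B : convergence of the idealized losses
  have hIconv : Tendsto (fun n => ∫ ω, min (Rf n (X ω)) c ∂μ) atTop
      (nhds (∫ ω, min (Rstar (X ω)) c ∂μ)) := by
    rw [tendsto_iff_dist_tendsto_zero]
    have hbound : ∀ n, dist (∫ ω, min (Rf n (X ω)) c ∂μ) (∫ ω, min (Rstar (X ω)) c ∂μ)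
        ≤ 2 * Real.sqrt B * Real.sqrt (∫ ω, (f n (X ω) - fstar (X ω)) ^ 2 ∂μ) := by
      intro n
      rw [Real.dist_eq]
      have i1 : Integrable (fun ω => min (Rf n (X ω)) c) μ := hminint _ (hRf_m n) (hRfint n)
      have i2 : Integrable (fun ω => min (Rstar (X ω)) c) μ := hminint _ hRstar_m hRsint
      have e1 : (fun ω => Rf n (X ω) - Rstar (X ω)) =ᵐ[μ]
          μ[(fun ω => (f n (X ω) - Y ω) ^ 2 - (fstar (X ω) - Y ω) ^ 2)|
            MeasurableSpace.comap X inferInstance] :=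
        ((hRf n).sub hRstar).trans (condExp_sub (hZint n) hZsint _).symm
      have hL2n : MemLp (fun ω => f n (X ω) - fstar (X ω)) 2 μ := by
        refine MemLp.of_bound (((hf n).comp hX).sub (hfstar_m.comp hX)).aestronglyMeasurable
          (2 * Real.sqrt B) ?_
        filter_upwards [hBn n, hBstar] with ω h1 h2
        have ha : |f n (X ω) - Y ω| ≤ Real.sqrt B := Real.abs_le_sqrt h1
        have hb : |fstar (X ω) - Y ω| ≤ Real.sqrt B := Real.abs_le_sqrt h2
        rw [Real.norm_eq_abs]
        calc |f n (X ω) - fstar (X ω)|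
            = |(f n (X ω) - Y ω) - (fstar (X ω) - Y ω)| := by ring_nf
          _ ≤ |f n (X ω) - Y ω| + |fstar (X ω) - Y ω| := abs_sub _ _
          _ ≤ 2 * Real.sqrt B := by linarith
      have habsint : Integrable (fun ω => |f n (X ω) - fstar (X ω)|) μ :=
        (hL2n.integrable one_le_two).abs
      calc |(∫ ω, min (Rf n (X ω)) c ∂μ) - ∫ ω, min (Rstar (X ω)) c ∂μ|
          = |∫ ω, (min (Rf n (X ω)) c - min (Rstar (X ω)) c) ∂μ| := by
            rw [integral_sub i1 i2]
        _ ≤ ∫ ω, |min (Rf n (X ω)) c - min (Rstar (X ω)) c| ∂μ := by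
            simpa [Real.norm_eq_abs] using
              norm_integral_le_integral_norm
                (fun ω => min (Rf n (X ω)) c - min (Rstar (X ω)) c) (μ := μ)
        _ ≤ ∫ ω, |Rf n (X ω) - Rstar (X ω)| ∂μ := by
            refine integral_mono (i1.sub i2).abs ((hRfint n).sub hRsint).abs ?_
            exact fun ω => Stmt16Aux.min_lip _ _ _
        _ = ∫ ω, |(μ[(fun ω => (f n (X ω) - Y ω) ^ 2 - (fstar (X ω) - Y ω) ^ 2)|
              MeasurableSpace.comap X inferInstance]) ω| ∂μ := by
            apply integral_congr_ae
            filter_upwards [e1] with ω h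
            rw [← h]
        _ ≤ ∫ ω, |(f n (X ω) - Y ω) ^ 2 - (fstar (X ω) - Y ω) ^ 2| ∂μ :=
            integral_abs_condExp_le _
        _ ≤ ∫ ω, 2 * Real.sqrt B * |f n (X ω) - fstar (X ω)| ∂μ := by
            refine integral_mono_ae ((hZint n).sub hZsint).abs (habsint.const_mul _) ?_
            filter_upwards [hBn n, hBstar] with ω h1 h2
            have ha : |f n (X ω) - Y ω| ≤ Real.sqrt B := Real.abs_le_sqrt h1
            have hb : |fstar (X ω) - Y ω| ≤ Real.sqrt B := Real.abs_le_sqrt h2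
            have hfactor : (f n (X ω) - Y ω) ^ 2 - (fstar (X ω) - Y ω) ^ 2 =
                ((f n (X ω) - Y ω) - (fstar (X ω) - Y ω)) *
                  ((f n (X ω) - Y ω) + (fstar (X ω) - Y ω)) := by ring
            have hd : (f n (X ω) - Y ω) - (fstar (X ω) - Y ω) = f n (X ω) - fstar (X ω) := by
              ring
            calc |(f n (X ω) - Y ω) ^ 2 - (fstar (X ω) - Y ω) ^ 2|
                = |(f n (X ω) - Y ω) - (fstar (X ω) - Y ω)| *
                    |(f n (X ω) - Y ω) + (fstar (X ω) - Y ω)| := by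
                  rw [hfactor, abs_mul]
              _ ≤ |(f n (X ω) - Y ω) - (fstar (X ω) - Y ω)| * (2 * Real.sqrt B) := by
                  refine mul_le_mul_of_nonneg_left ?_ (abs_nonneg _)
                  calc |(f n (X ω) - Y ω) + (fstar (X ω) - Y ω)|
                      ≤ |f n (X ω) - Y ω| + |fstar (X ω) - Y ω| := abs_add_le _ _
                    _ ≤ 2 * Real.sqrt B := by linarith
              _ = 2 * Real.sqrt B * |f n (X ω) - fstar (X ω)| := by rw [hd]; ring
        _ = 2 * Real.sqrt B * ∫ ω, |f n (X ω) - fstar (X ω)| ∂μ := integral_const_mul _ _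
        _ ≤ 2 * Real.sqrt B * Real.sqrt (∫ ω, (f n (X ω) - fstar (X ω)) ^ 2 ∂μ) := by
            refine mul_le_mul_of_nonneg_left ?_ (by positivity)
            exact Stmt16Aux.int_abs_le_sqrt μ _ hL2n
    have h0 : Tendsto (fun n => 2 * Real.sqrt B *
        Real.sqrt (∫ ω, (f n (X ω) - fstar (X ω)) ^ 2 ∂μ)) atTop (nhds 0) := by
      have hs : Tendsto (fun n => Real.sqrt (∫ ω, (f n (X ω) - fstar (X ω)) ^ 2 ∂μ))
          atTop (nhds 0) := by
        have := (Real.continuous_sqrt.tendsto 0).comp hfconv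
        simpa [Function.comp_def] using this
      simpa using hs.const_mul (2 * Real.sqrt B)
    exact squeeze_zero (fun n => dist_nonneg) hbound h0
  -- Step A : the actual rejectors are close to the induced ones
  have hq0 : ∀ n, |LRwR μ X Y c (f n) (r n) - ∫ ω, min (Rf n (X ω)) c ∂μ| ≤
      (B + c) * ∫ ω, (r n (X ω) - if Rf n (X ω) ≤ c then (1 : ℝ) else 0) ^ 2 ∂μ := by
    intro n
    rw [← key n]
    have hrm : Measurable (fun ω => r n (X ω)) := (hr_m n).comp hX
    have hrbdd : ∀ᵐ ω ∂μ, ‖r n (X ω)‖ ≤ 1 := by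
      filter_upwards with ω
      rcases hr01 n (X ω) with h | h <;> simp [h]
    have hind_m : Measurable (fun ω => if Rf n (X ω) ≤ c then (1 : ℝ) else 0) :=
      Measurable.ite (measurableSet_le ((hRf_m n).comp hX) measurable_const)
        measurable_const measurable_const
    have hind_bdd : ∀ᵐ ω ∂μ, ‖if Rf n (X ω) ≤ c then (1 : ℝ) else 0‖ ≤ 1 := by
      filter_upwards with ω
      by_cases h : Rf n (X ω) ≤ c <;> simp [h]
    have hrint : Integrable (fun ω => r n (X ω)) μ :=
      (integrable_const (1 : ℝ)).mono' hrm.aestronglyMeasurable hrbdd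
    have hind_int : Integrable (fun ω => if Rf n (X ω) ≤ c then (1 : ℝ) else 0) μ :=
      (integrable_const (1 : ℝ)).mono' hind_m.aestronglyMeasurable hind_bdd
    have i1a : Integrable (fun ω => r n (X ω) * (f n (X ω) - Y ω) ^ 2) μ :=
      (hZint n).bdd_mul hrm.aestronglyMeasurable hrbdd
    have i1b : Integrable (fun ω => (1 - r n (X ω)) * c) μ :=
      ((integrable_const (1 : ℝ)).sub hrint).mul_const c
    have i2a : Integrable
        (fun ω => (if Rf n (X ω) ≤ c then (1 : ℝ) else 0) * (f n (X ω) - Y ω) ^ 2) μ :=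
      (hZint n).bdd_mul hind_m.aestronglyMeasurable hind_bdd
    have i2b : Integrable (fun ω => (1 - if Rf n (X ω) ≤ c then (1 : ℝ) else 0) * c) μ :=
      ((integrable_const (1 : ℝ)).sub hind_int).mul_const c
    have hsqint : Integrable
        (fun ω => (r n (X ω) - if Rf n (X ω) ≤ c then (1 : ℝ) else 0) ^ 2) μ := by
      refine (integrable_const (1 : ℝ)).mono'
        ((hrm.sub hind_m).pow_const 2).aestronglyMeasurable ?_
      filter_upwards with ω
      rw [Real.norm_eq_abs, abs_of_nonneg (sq_nonneg _)]
      rcases hr01 n (X ω) with h | h <;> by_cases hι : Rf n (X ω) ≤ c <;>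
        simp [h, hι] <;> norm_num
    have hdiff : LRwR μ X Y c (f n) (r n) -
        LRwR μ X Y c (f n) (fun x => if Rf n x ≤ c then 1 else 0) =
        ∫ ω, (r n (X ω) - if Rf n (X ω) ≤ c then (1 : ℝ) else 0) *
          ((f n (X ω) - Y ω) ^ 2 - c) ∂μ := by
      have j1 : Integrable (fun ω => r n (X ω) * (f n (X ω) - Y ω) ^ 2 +
          (1 - r n (X ω)) * c) μ := i1a.add i1b
      have j2 : Integrable (fun ω => (if Rf n (X ω) ≤ c then (1 : ℝ) else 0) *
          (f n (X ω) - Y ω) ^ 2 + (1 - if Rf n (X ω) ≤ c then (1 : ℝ) else 0) * c) μ :=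
        i2a.add i2b
      rw [LRwR, LRwR, ← integral_sub j1 j2]
      apply integral_congr_ae
      filter_upwards with ω
      ring
    rw [hdiff]
    calc |∫ ω, (r n (X ω) - if Rf n (X ω) ≤ c then (1 : ℝ) else 0) *
          ((f n (X ω) - Y ω) ^ 2 - c) ∂μ|
        ≤ ∫ ω, |(r n (X ω) - if Rf n (X ω) ≤ c then (1 : ℝ) else 0) *
          ((f n (X ω) - Y ω) ^ 2 - c)| ∂μ := by
          simpa only [Real.norm_eq_abs] using
            norm_integral_le_integral_norm
              (fun ω => (r n (X ω) - if Rf n (X ω) ≤ c then (1 : ℝ) else 0) *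
                ((f n (X ω) - Y ω) ^ 2 - c)) (μ := μ)
      _ ≤ ∫ ω, (B + c) *
          (r n (X ω) - if Rf n (X ω) ≤ c then (1 : ℝ) else 0) ^ 2 ∂μ := by
          have iabs : Integrable (fun ω =>
              |(r n (X ω) - if Rf n (X ω) ≤ c then (1 : ℝ) else 0) *
                ((f n (X ω) - Y ω) ^ 2 - c)|) μ := by
            refine Integrable.abs ?_
            have : Integrable (fun ω => (f n (X ω) - Y ω) ^ 2 - c) μ :=
              (hZint n).sub (integrable_const c)
            refine this.bdd_mul (c := 2) (hrm.sub hind_m).aestronglyMeasurable ?_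
            filter_upwards with ω
            rcases hr01 n (X ω) with h | h <;> by_cases hι : Rf n (X ω) ≤ c <;>
              simp [h, hι] <;> norm_num
          refine integral_mono_ae iabs (hsqint.const_mul _) ?_
          filter_upwards [hBn n] with ω h1
          have h01 : |r n (X ω) - if Rf n (X ω) ≤ c then (1 : ℝ) else 0| ≤
              (r n (X ω) - if Rf n (X ω) ≤ c then (1 : ℝ) else 0) ^ 2 := by
            rcases hr01 n (X ω) with h | h <;> by_cases hι : Rf n (X ω) ≤ c <;>
              simp [h, hι]
          have hzc : |(f n (X ω) - Y ω) ^ 2 - c| ≤ B + c := by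
            rw [abs_sub_le_iff]
            constructor <;> nlinarith [sq_nonneg (f n (X ω) - Y ω)]
          calc |(r n (X ω) - if Rf n (X ω) ≤ c then (1 : ℝ) else 0) *
              ((f n (X ω) - Y ω) ^ 2 - c)|
              = |r n (X ω) - if Rf n (X ω) ≤ c then (1 : ℝ) else 0| *
                |(f n (X ω) - Y ω) ^ 2 - c| := abs_mul _ _
            _ ≤ (r n (X ω) - if Rf n (X ω) ≤ c then (1 : ℝ) else 0) ^ 2 * (B + c) :=
                mul_le_mul h01 hzc (abs_nonneg _) (sq_nonneg _)
            _ = (B + c) * (r n (X ω) - if Rf n (X ω) ≤ c then (1 : ℝ) else 0) ^ 2 := by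
                ring
      _ = (B + c) * ∫ ω, (r n (X ω) - if Rf n (X ω) ≤ c then (1 : ℝ) else 0) ^ 2 ∂μ :=
          integral_const_mul _ _
  have hDconv : Tendsto (fun n => LRwR μ X Y c (f n) (r n) -
      ∫ ω, min (Rf n (X ω)) c ∂μ) atTop (nhds 0) := by
    have habs : Tendsto (fun n => |LRwR μ X Y c (f n) (r n) -
        ∫ ω, min (Rf n (X ω)) c ∂μ|) atTop (nhds 0) := by
      refine squeeze_zero (fun n => abs_nonneg _) hq0 ?_
      simpa using hrconv.const_mul (B + c)
    exact tendsto_zero_iff_abs_tendsto_zero _ |>.mpr habs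
  rw [keystar]
  have hsplit : (fun n => LRwR μ X Y c (f n) (r n)) =
      fun n => (LRwR μ X Y c (f n) (r n) - ∫ ω, min (Rf n (X ω)) c ∂μ) +
        ∫ ω, min (Rf n (X ω)) c ∂μ := by
    funext n; ring
  rw [hsplit]
  simpa using hDconv.add hIconv
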